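/- Let φ = ◇◇p ∧ ¬◇p and ψ = ◇◇¬q ∨ q. Then (1) for every weakly transitive Kripke model M and every world w, M,w ⊨ φ implies M,w ⊨ ψ; but (2) there is no ML-formula χ containing no propositional variables (i.e., with sig(χ) = ∅) such that, over weakly transitive Kripke models, φ entails χ and χ entails ψ at every world. Consequently, the modal logic wK4 does not have the Craig interpolation property. -/

import Mathlib

/-- Formulas of propositional modal logic ML. -/
inductive ML : Type
  | top : ML
  | var : ℕ → ML
  | and : ML → ML → ML
  | not : ML → ML
  | dia : ML → ML

/-- `φ ∨ ψ` abbreviates `¬(¬φ ∧ ¬ψ)`. -/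
def ML.or (φ ψ : ML) : ML := .not (.and (.not φ) (.not ψ))

/-- The signature of a formula: the set of propositional variables occurring in it. -/
def ML.sig : ML → Set ℕ
  | .top => ∅
  | .var p => {p}
  | .and φ ψ => φ.sig ∪ ψ.sig
  | .not φ => φ.sig
  | .dia φ => φ.sig

/-- A Kripke model. -/
structure Kripke : Type 1 where
  W : Type
  nonempty : Nonempty W
  R : W → W → Prop
  V : ℕ → Set W

/-- Truth of an ML-formula at a world of a Kripke model. -/
def ML.sat (M : Kripke) : M.W → ML → Prop
  | _, .top => True
  | w, .var p => w ∈ M.V p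
  | w, .and φ ψ => ML.sat M w φ ∧ ML.sat M w ψ
  | w, .not φ => ¬ ML.sat M w φ
  | w, .dia φ => ∃ v, M.R w v ∧ ML.sat M v φ

/-- A Kripke model is weakly transitive if `xRy` and `yRz` imply `x = z` or `xRz`. -/
def Kripke.WeaklyTransitive (M : Kripke) : Prop :=
  ∀ x y z : M.W, M.R x y → M.R y z → x = z ∨ M.R x z

/-- Entailment at every world of every weakly transitive Kripke model (wK4-entailment). -/
def WK4Entails (φ ψ : ML) : Prop :=
  ∀ M : Kripke, M.WeaklyTransitive → ∀ w : M.W, ML.sat M w φ → ML.sat M w ψ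

/-- Two-element cycle model: worlds `true ↔ false`, `p` true only at `true`. -/
def MOne (p : ℕ) : Kripke :=
  ⟨Bool, ⟨true⟩, fun x y => x ≠ y, fun r => if r = p then {true} else ∅⟩

/-- Strictly increasing chain model: worlds ℕ with `<`, `q` true except at 0. -/
def MTwo (q : ℕ) : Kripke :=
  ⟨ℕ, ⟨0⟩, (· < ·), fun r => if r = q then {n | n ≠ 0} else ∅⟩

/-- Variable-free formulas cannot distinguish any world of `MOne` from any world of `MTwo`. -/
lemma sig_empty_transfer (p q : ℕ) :
    ∀ χ : ML, χ.sig = ∅ → ∀ (x : Bool) (n : ℕ),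
      ML.sat (MOne p) x χ ↔ ML.sat (MTwo q) n χ := by
  intro χ
  induction χ with
  | top => intro _ x n; simp [ML.sat]
  | var r => intro h; exact absurd h (Set.singleton_ne_empty r)
  | and α β ihα ihβ =>
      intro h x n
      rw [ML.sig] at h
      have h1 : α.sig = ∅ := Set.subset_empty_iff.mp (h ▸ Set.subset_union_left)
      have h2 : β.sig = ∅ := Set.subset_empty_iff.mp (h ▸ Set.subset_union_right)
      simp only [ML.sat]
      rw [ihα h1 x n, ihβ h2 x n]
  | not α ih =>
      intro h x n
      rw [ML.sig] at h
      simp only [ML.sat]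
      rw [ih h x n]
  | dia α ih =>
      intro h x n
      rw [ML.sig] at h
      simp only [ML.sat]
      constructor
      · rintro ⟨v, _, hv⟩
        exact ⟨n + 1, by simp [MTwo], (ih h v (n + 1)).mp hv⟩
      · rintro ⟨m, _, hm⟩
        exact ⟨!x, by cases x <;> simp [MOne], (ih h (!x) m).mpr hm⟩

theorem wK4_no_interpolant (p q : ℕ) (hpq : p ≠ q)
    (φ ψ : ML)
    (hφ : φ = ML.and (ML.dia (ML.dia (ML.var p))) (ML.not (ML.dia (ML.var p))))
    (hψ : ψ = ML.or (ML.dia (ML.dia (ML.not (ML.var q)))) (ML.var q)) :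
    WK4Entails φ ψ ∧
      ¬ ∃ χ : ML, χ.sig = ∅ ∧ WK4Entails φ χ ∧ WK4Entails χ ψ := by
  subst hφ hψ
  constructor
  · -- part (1)
    intro M hWT w hsat
    obtain ⟨⟨v, hwv, u, hvu, hup⟩, hnd⟩ := hsat
    have hwu : w = u := by
      rcases hWT w v u hwv hvu with h | h
      · exact h
      · exact absurd ⟨u, h, hup⟩ hnd
    subst hwu
    simp only [ML.or, ML.sat]
    rintro ⟨h1, h2⟩
    exact h1 ⟨v, hwv, w, hvu, fun hq => h2 hq⟩
  · -- part (2)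
    rintro ⟨χ, hsig, h1, h2⟩
    have hWT1 : (MOne p).WeaklyTransitive := by
      intro x y z hxy hyz
      left
      cases x <;> cases y <;> cases z <;> simp_all [MOne]
    have hWT2 : (MTwo q).WeaklyTransitive := by
      intro x y z hxy hyz
      right
      exact lt_trans hxy hyz
    have hφ1 : ML.sat (MOne p) true
        (ML.and (ML.dia (ML.dia (ML.var p))) (ML.not (ML.dia (ML.var p)))) := by
      refine ⟨⟨false, by simp [MOne], true, by simp [MOne], by simp [MOne, ML.sat]; exact rfl⟩, ?_⟩
      rintro ⟨v, hv, hvp⟩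
      cases v
      · simp [MOne, ML.sat] at hvp; exact Bool.false_ne_true hvp
      · simp [MOne] at hv
    have hχ1 : ML.sat (MOne p) true χ := h1 _ hWT1 true hφ1
    have hχ2 : ML.sat (MTwo q) Nat.zero χ :=
      (sig_empty_transfer p q χ hsig true Nat.zero).mp hχ1
    have hψ2 := h2 _ hWT2 Nat.zero hχ2
    simp only [ML.or, ML.sat, MTwo, Set.mem_setOf_eq, if_pos rfl] at hψ2
    simp only [if_true, Set.mem_setOf_eq] at hψ2
    push_neg at hψ2
    exact hψ2 (fun v hv v1 hv1 => by omega) rfl
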